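/- Define w(n,i) := 4(n+1)(n−i)(n−i−1)(i−1)/(n(n−1)²·i²(i+1)²(i+2)(i+3)) and c(n,k1,k2) := −8(n+1)(3n−k2+2)(n−k2−1)/(n(n−1)²(k1+1)(k1+2)(k2+1)(k2+2)(k2+3)(k2+4)). Then for all integers n ≥ 4 and 1 ≤ i1 < i2 ≤ n−1: (1/(i1·i2))·[ i2²·w(n,i2) + ∑_{k1=i1}^{i2−1} ∑_{k2=i2}^{n−1} c(n,k1,k2) ] = 4(n+1)(i1−1)(n−i2)(n−i2−1)/(n(n−1)²·i1(i1+1)·i2(i2+1)(i2+2)(i2+3)). -/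

import Mathlib

/-- `w(n,i) = Var(V_i^{(n)})`. -/
noncomputable def wVar (n i : ℝ) : ℝ :=
  4 * (n + 1) * (n - i) * (n - i - 1) * (i - 1) /
    (n * (n - 1) ^ 2 * i ^ 2 * (i + 1) ^ 2 * (i + 2) * (i + 3))

/-- `c(n,k1,k2) = Cov(E[1_{k1}^{(n)} | 𝒴_n], E[1_{k2}^{(n)} | 𝒴_n])`. -/
noncomputable def cCov (n k1 k2 : ℝ) : ℝ :=
  -8 * (n + 1) * (3 * n - k2 + 2) * (n - k2 - 1) /
    (n * (n - 1) ^ 2 * (k1 + 1) * (k1 + 2) * (k2 + 1) * (k2 + 2) * (k2 + 3) * (k2 + 4))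

lemma sumA (a m : ℕ) (h : a ≤ m) :
    ∑ k ∈ Finset.Icc a m, (1 : ℝ) / ((k + 1) * (k + 2)) =
      1 / ((a : ℝ) + 1) - 1 / ((m : ℝ) + 2) := by
  induction m, h using Nat.le_induction with
  | base =>
    simp only [Finset.Icc_self, Finset.sum_singleton]
    have h1 : (a : ℝ) + 1 ≠ 0 := by positivity
    have h2 : (a : ℝ) + 2 ≠ 0 := by positivity
    field_simp
    ring
  | succ m hm ih =>
    rw [Finset.sum_Icc_succ_top (by omega), ih]
    push_cast
    have h1 : (m : ℝ) + 2 ≠ 0 := by positivity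
    have h2 : (m : ℝ) + 3 ≠ 0 := by positivity
    have h3 : (m : ℝ) + 1 + 1 ≠ 0 := by positivity
    have h4 : (m : ℝ) + 1 + 2 ≠ 0 := by positivity
    field_simp
    ring

noncomputable def ffun (n : ℝ) (k : ℕ) : ℝ :=
  (n - k) * (n - k - 1) / (((k : ℝ) + 1) * ((k : ℝ) + 2) * ((k : ℝ) + 3))

lemma sumB (n : ℝ) (a m : ℕ) (h : a ≤ m) :
    ∑ k ∈ Finset.Icc a m,
        (3 * n - k + 2) * (n - k - 1) /
          (((k : ℝ) + 1) * ((k : ℝ) + 2) * ((k : ℝ) + 3) * ((k : ℝ) + 4)) =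
      ffun n a - ffun n (m + 1) := by
  have key : ∀ k : ℕ, (3 * n - k + 2) * (n - k - 1) /
      (((k : ℝ) + 1) * ((k : ℝ) + 2) * ((k : ℝ) + 3) * ((k : ℝ) + 4)) =
      ffun n k - ffun n (k + 1) := by
    intro k
    unfold ffun
    push_cast
    have h1 : (k : ℝ) + 1 ≠ 0 := by positivity
    have h2 : (k : ℝ) + 2 ≠ 0 := by positivity
    have h3 : (k : ℝ) + 3 ≠ 0 := by positivity
    have h4 : (k : ℝ) + 4 ≠ 0 := by positivity
    have h5 : (k : ℝ) + 1 + 1 ≠ 0 := by positivity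
    have h6 : (k : ℝ) + 1 + 2 ≠ 0 := by positivity
    have h7 : (k : ℝ) + 1 + 3 ≠ 0 := by positivity
    field_simp
    ring
  induction m, h using Nat.le_induction with
  | base => simp only [Finset.Icc_self, Finset.sum_singleton, key]
  | succ m hm ih =>
    rw [Finset.sum_Icc_succ_top (by omega), ih, key]
    ring

/-- Closed form for the covariance `Cov(V_{i1}^{(n)}, V_{i2}^{(n)})` of the topological
weights of a Yule tree with `n` tips. -/
theorem stmt7 (n i1 i2 : ℕ) (hn : 4 ≤ n) (hi1 : 1 ≤ i1) (hi12 : i1 < i2) (hi2 : i2 ≤ n - 1) :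
    (1 / ((i1 : ℝ) * (i2 : ℝ))) *
      ((i2 : ℝ) ^ 2 * wVar n i2 +
        ∑ k1 ∈ Finset.Icc i1 (i2 - 1), ∑ k2 ∈ Finset.Icc i2 (n - 1), cCov n k1 k2) =
    4 * ((n : ℝ) + 1) * ((i1 : ℝ) - 1) * ((n : ℝ) - i2) * ((n : ℝ) - i2 - 1) /
      ((n : ℝ) * ((n : ℝ) - 1) ^ 2 * (i1 : ℝ) * ((i1 : ℝ) + 1) * (i2 : ℝ) *
        ((i2 : ℝ) + 1) * ((i2 : ℝ) + 2) * ((i2 : ℝ) + 3)) := by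
  have hnR : (4 : ℝ) ≤ (n : ℝ) := by exact_mod_cast hn
  have hn0 : (n : ℝ) ≠ 0 := by linarith
  have hn1 : (n : ℝ) - 1 ≠ 0 := by linarith
  have hi1R : (1 : ℝ) ≤ (i1 : ℝ) := by exact_mod_cast hi1
  have hi2R : (i1 : ℝ) < (i2 : ℝ) := by exact_mod_cast hi12
  have hsplit : ∀ k1 k2 : ℕ, cCov n k1 k2 =
      (-8 * ((n : ℝ) + 1) / ((n : ℝ) * ((n : ℝ) - 1) ^ 2)) *
        ((1 : ℝ) / (((k1 : ℝ) + 1) * ((k1 : ℝ) + 2))) *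
        ((3 * (n : ℝ) - k2 + 2) * ((n : ℝ) - k2 - 1) /
          (((k2 : ℝ) + 1) * ((k2 : ℝ) + 2) * ((k2 : ℝ) + 3) * ((k2 : ℝ) + 4))) := by
    intro k1 k2
    unfold cCov
    have h1 : (k1 : ℝ) + 1 ≠ 0 := by positivity
    have h2 : (k1 : ℝ) + 2 ≠ 0 := by positivity
    have h3 : (k2 : ℝ) + 1 ≠ 0 := by positivity
    have h4 : (k2 : ℝ) + 2 ≠ 0 := by positivity
    have h5 : (k2 : ℝ) + 3 ≠ 0 := by positivity
    have h6 : (k2 : ℝ) + 4 ≠ 0 := by positivity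
    field_simp
  have hsum : ∑ k1 ∈ Finset.Icc i1 (i2 - 1), ∑ k2 ∈ Finset.Icc i2 (n - 1), cCov n k1 k2 =
      (-8 * ((n : ℝ) + 1) / ((n : ℝ) * ((n : ℝ) - 1) ^ 2)) *
        ((1 / ((i1 : ℝ) + 1) - 1 / ((i2 : ℝ) + 1)) *
          (((n : ℝ) - i2) * ((n : ℝ) - i2 - 1) /
            (((i2 : ℝ) + 1) * ((i2 : ℝ) + 2) * ((i2 : ℝ) + 3)))) := by
    have h1 : i1 ≤ i2 - 1 := by omega
    have h2 : i2 ≤ n - 1 := hi2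
    rw [Finset.sum_congr rfl fun k1 _ => Finset.sum_congr rfl fun k2 _ => hsplit k1 k2]
    simp only [← Finset.mul_sum, ← Finset.sum_mul]
    rw [sumA i1 (i2 - 1) h1, sumB (n : ℝ) i2 (n - 1) h2]
    have hc1 : ((i2 - 1 : ℕ) : ℝ) = (i2 : ℝ) - 1 := by
      have : 1 ≤ i2 := by omega
      push_cast [this]; ring
    have hc2 : ((n - 1 : ℕ) : ℝ) = (n : ℝ) - 1 := by
      have : 1 ≤ n := by omega
      push_cast [this]; ring
    have hfend : ffun (n : ℝ) (n - 1 + 1) = 0 := by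
      unfold ffun
      have : ((n - 1 + 1 : ℕ) : ℝ) = (n : ℝ) := by
        have : 1 ≤ n := by omega
        push_cast [this]; ring
      rw [this]
      simp
    rw [hfend, hc1]
    unfold ffun
    ring
  rw [hsum]
  unfold wVar
  have z1 : (i1 : ℝ) ≠ 0 := by linarith
  have z2 : (i2 : ℝ) ≠ 0 := by linarith
  have z3 : (i1 : ℝ) + 1 ≠ 0 := by linarith
  have z4 : (i2 : ℝ) + 1 ≠ 0 := by linarith
  have z5 : (i2 : ℝ) + 2 ≠ 0 := by linarith
  have z6 : (i2 : ℝ) + 3 ≠ 0 := by linarith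
  field_simp
  ring
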